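/- Let k ≥ 2, σ_i = i(k−i)/2, and let f : ℝ^k → ℝ^k be the right-hand side of system (P), i.e. f_1(ξ) = −σ₁(e^{−(ξ₂−ξ₁)} − 1), f_i(ξ) = σ_{i−1}(e^{−(ξ_i−ξ_{i−1})} − 1) − σ_i(e^{−(ξ_{i+1}−ξ_i)} − 1) for 2 ≤ i ≤ k−1, and f_k(ξ) = σ_{k−1}(e^{−(ξ_k−ξ_{k−1})} − 1). Let η ∈ (0,1), C₀ > 0, τ₀ ≥ 0, and let ξ : [τ₀, ∞) → ℝ^k be a C¹ function such that for all τ ≥ τ₀: ∑_{i=1}^k ξ_i(τ) = 0, ‖ξ(τ)‖ ≤ C₀, and ‖ξ'(τ) − f(ξ(τ))‖ ≤ C₀·e^{−ητ}, where ‖·‖ is the Euclidean norm on ℝ^k. Then there exists a constant C > 0 (depending on k, η, C₀, τ₀) such that ‖ξ(τ)‖ ≤ C·e^{−ητ} for all τ ≥ τ₀. -/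

import Mathlib

/-- `σᵢ = i(k-i)/2` (so that `σ₀ = σ_k = 0`). -/
noncomputable def sig (k i : ℕ) : ℝ := (i : ℝ) * ((k : ℝ) - (i : ℝ)) / 2

/-- The right-hand side of system (P): for `i = 1,…,k`,
`fᵢ(ξ) = σᵢ₋₁(e^{-(ξᵢ-ξᵢ₋₁)} - 1) - σᵢ(e^{-(ξᵢ₊₁-ξᵢ)} - 1)`
(the conventions for `i = 1` and `i = k` are automatic since `σ₀ = σ_k = 0`). -/
noncomputable def fP (k : ℕ) (ξ : ℕ → ℝ) (i : ℕ) : ℝ :=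
  sig k (i - 1) * (Real.exp (-(ξ i - ξ (i - 1))) - 1)
    - sig k i * (Real.exp (-(ξ (i + 1) - ξ i)) - 1)

open Finset


lemma exp_pointwise {M d : ℝ} (hM : 0 ≤ M) (hd : |d| ≤ M) :
    d * (Real.exp (-d) - 1) ≤ -(1/(1+M)) * d ^ 2 := by
  have hM1 : (0:ℝ) < 1 + M := by linarith
  rcases le_or_gt d 0 with h | h
  · have hC : d * (Real.exp (-d) - 1) ≤ d * (-d) :=
      mul_le_mul_of_nonpos_left (by linarith [Real.add_one_le_exp (-d)]) h
    have hD : d^2/(1+M) ≤ d^2 := div_le_self (sq_nonneg d) (by linarith)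
    have : -(1/(1+M)) * d ^ 2 = -(d^2/(1+M)) := by ring
    rw [this]; nlinarith [hC, hD]
  · have hdM : d ≤ M := (abs_le.1 hd).2
    have h2 : Real.exp (-d) * Real.exp d = 1 := by rw [← Real.exp_add]; simp
    have h1 : Real.exp (-d) * (1 + d) ≤ 1 := by
      nlinarith [Real.add_one_le_exp d, Real.exp_pos (-d)]
    have h5 : Real.exp (-d) ≤ 1 := by
      calc Real.exp (-d) ≤ Real.exp 0 := Real.exp_le_exp.2 (by linarith)
      _ = 1 := Real.exp_zero
    have hA : d * (Real.exp (-d) * (1+d)) ≤ d * 1 := mul_le_mul_of_nonneg_left h1 h.le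
    have hB : Real.exp (-d) * (d*(M-d)) ≤ 1 * (d*(M-d)) :=
      mul_le_mul_of_nonneg_right h5 (by nlinarith)
    have hkey : d * (Real.exp (-d) - 1) * (1+M) ≤ -(d^2) := by nlinarith [hA, hB]
    have : -(1/(1+M)) * d ^ 2 = (-(d^2))/(1+M) := by ring
    rw [this, le_div_iff₀ hM1]
    exact hkey


lemma abel_sum (x w G : ℕ → ℝ) :
    ∀ k, 1 ≤ k → ∑ i ∈ Finset.Icc 1 k, x i * (w (i-1) * G (i-1) - w i * G i)
      = x 1 * (w 0 * G 0) - x k * (w k * G k)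
        + ∑ l ∈ Finset.Icc 1 (k-1), w l * G l * (x (l+1) - x l) := by
  intro k hk
  induction k, hk using Nat.le_induction with
  | base => simp; ring
  | succ k hk ih =>
    obtain ⟨m, rfl⟩ : ∃ m, k = m + 1 := ⟨k-1, by omega⟩
    rw [Finset.sum_Icc_succ_top (by omega : 1 ≤ m+1+1), ih]
    simp only [Nat.add_sub_cancel]
    rw [Finset.sum_Icc_succ_top (by omega : 1 ≤ m+1)]
    ring


lemma telescope (x : ℕ → ℝ) (i : ℕ) :
    ∀ j, i ≤ j → ∑ l ∈ Finset.Ico i j, (x (l+1) - x l) = x j - x i := by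
  intro j hj
  induction j, hj using Nat.le_induction with
  | base => simp
  | succ j hj ih =>
    rw [Finset.sum_Ico_succ_top hj, ih]; ring


lemma gauss_Ioc (n : ℕ) : ∑ j ∈ Finset.Ioc 0 n, (j:ℝ) = n*(n+1)/2 := by
  induction n with
  | zero => simp
  | succ n ih =>
    rw [← Finset.Icc_add_one_left_eq_Ioc] at *
    rw [Finset.sum_Icc_succ_top (by omega)]
    rw [ih]; push_cast; ring

lemma count_id (k l : ℕ) (hk : 2 ≤ k) (hl1 : 1 ≤ l) (hlk : l ≤ k-1) :
    ∑ i ∈ Finset.Icc 1 l, ∑ j ∈ Finset.Ioc l k, ((j:ℝ) - (i:ℝ)) = (k:ℝ) * sig k l := by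
  have hlk' : l ≤ k := by omega
  have hIoc : ∑ j ∈ Finset.Ioc l k, (j:ℝ) = k*(k+1)/2 - l*(l+1)/2 := by
    have := Finset.sum_Ioc_consecutive (fun j => (j:ℝ)) (Nat.zero_le l) hlk'
    rw [gauss_Ioc l, gauss_Ioc k] at this
    linarith
  have hcard : (Finset.Ioc l k).card = k - l := Nat.card_Ioc l k
  have hinner : ∀ i : ℕ, ∑ j ∈ Finset.Ioc l k, ((j:ℝ) - (i:ℝ))
      = (k*(k+1)/2 - l*(l+1)/2) - ((k:ℝ) - (l:ℝ)) * (i:ℝ) := by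
    intro i
    rw [Finset.sum_sub_distrib, hIoc, Finset.sum_const, hcard, nsmul_eq_mul]
    rw [Nat.cast_sub hlk']
  have hIcceq : Finset.Icc 1 l = Finset.Ioc 0 l := by ext a; simp; omega
  rw [Finset.sum_congr rfl (fun i _ => hinner i), Finset.sum_sub_distrib,
    Finset.sum_const, ← Finset.mul_sum, hIcceq, gauss_Ioc l, Nat.card_Ioc,
    nsmul_eq_mul, sig]
  push_cast [Nat.sub_zero]
  ring

lemma poincare (k : ℕ) (hk : 2 ≤ k) (x : ℕ → ℝ) (hsum : ∑ i ∈ Finset.Icc 1 k, x i = 0) :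
    ∑ i ∈ Finset.Icc 1 k, x i ^ 2 ≤ ∑ l ∈ Finset.Icc 1 (k-1), sig k l * (x (l+1) - x l)^2 := by
  set s := Finset.Icc 1 k with hs
  have hcard : s.card = k := by rw [hs, Nat.card_Icc]; omega
  set D : ℕ → ℝ := fun l => (x (l+1) - x l)^2 with hD
  -- Step 1: identity
  have step1 : ∑ i ∈ s, ∑ j ∈ s, (x i - x j)^2 = 2*(k:ℝ)*∑ i ∈ s, x i^2 := by
    have hin : ∀ i ∈ s, ∑ j ∈ s, (x i - x j)^2 = (k:ℝ) * x i^2 + ∑ j ∈ s, x j^2 := by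
      intro i _
      have hpt : ∀ j ∈ s, (x i - x j)^2 = x i^2 - 2*x i*x j + x j^2 := by intros; ring
      rw [Finset.sum_congr rfl hpt]
      rw [Finset.sum_add_distrib, Finset.sum_sub_distrib, ← Finset.mul_sum, hsum,
        Finset.sum_const, hcard, nsmul_eq_mul]
      ring
    rw [Finset.sum_congr rfl hin, Finset.sum_add_distrib, ← Finset.mul_sum,
      Finset.sum_const, hcard, nsmul_eq_mul]
    ring
  -- Step 2: pair bound
  have step2 : ∀ i ∈ s, ∀ j ∈ s, i < j →
      (x i - x j)^2 ≤ ((j:ℝ) - (i:ℝ)) * ∑ l ∈ Finset.Ico i j, D l := by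
    intro i hi j hj hij
    have htel : x j - x i = ∑ l ∈ Finset.Ico i j, (x (l+1) - x l) := by
      rw [telescope x i j hij.le]
    have hCS := sq_sum_le_card_mul_sum_sq (s := Finset.Ico i j)
      (f := fun l => x (l+1) - x l)
    rw [← htel, Nat.card_Ico] at hCS
    have hxx : (x i - x j)^2 = (x j - x i)^2 := by ring
    rw [hxx]
    calc (x j - x i)^2 ≤ ((j - i : ℕ) : ℝ) * ∑ l ∈ Finset.Ico i j, (x (l+1) - x l)^2 := hCS
      _ = ((j:ℝ) - (i:ℝ)) * ∑ l ∈ Finset.Ico i j, D l := by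
          rw [Nat.cast_sub hij.le]
  -- Step 3: symmetrization
  have step3 : ∑ i ∈ s, ∑ j ∈ s, (x i - x j)^2
      = 2 * ∑ i ∈ s, ∑ j ∈ s, (if i < j then (x i - x j)^2 else 0) := by
    have hdec : ∀ i ∈ s, ∀ j ∈ s, (x i - x j)^2
        = (if i < j then (x i - x j)^2 else 0) + (if j < i then (x i - x j)^2 else 0) := by
      intro i _ j _
      rcases lt_trichotomy i j with h|h|h
      · simp [h, asymm h]
      · simp [h]
      · simp [h, asymm h]
    calc ∑ i ∈ s, ∑ j ∈ s, (x i - x j)^2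
        = ∑ i ∈ s, ∑ j ∈ s, ((if i < j then (x i - x j)^2 else 0)
            + (if j < i then (x i - x j)^2 else 0)) :=
          Finset.sum_congr rfl fun i hi => Finset.sum_congr rfl fun j hj => hdec i hi j hj
      _ = (∑ i ∈ s, ∑ j ∈ s, (if i < j then (x i - x j)^2 else 0))
            + ∑ i ∈ s, ∑ j ∈ s, (if j < i then (x i - x j)^2 else 0) := by
          rw [← Finset.sum_add_distrib]
          exact Finset.sum_congr rfl fun i _ => Finset.sum_add_distrib
      _ = 2 * ∑ i ∈ s, ∑ j ∈ s, (if i < j then (x i - x j)^2 else 0) := by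
          rw [Finset.sum_comm (s := s) (t := s)
            (f := fun i j => if j < i then (x i - x j)^2 else 0)]
          have he : ∑ j ∈ s, ∑ i ∈ s, (if j < i then (x i - x j)^2 else 0)
              = ∑ i ∈ s, ∑ j ∈ s, (if i < j then (x i - x j)^2 else 0) := by
            refine Finset.sum_congr rfl fun a _ => Finset.sum_congr rfl fun b _ => ?_
            split_ifs <;> ring
          rw [he]; ring
  -- Step 4: exchange of summation
  have inner_eq : ∀ i ∈ s, ∀ j ∈ s,
      (if i < j then ((j:ℝ)-(i:ℝ)) * ∑ l ∈ Finset.Ico i j, D l else 0)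
        = ∑ l ∈ Finset.Icc 1 (k-1), (if i ≤ l ∧ l < j then ((j:ℝ)-(i:ℝ)) * D l else 0) := by
    intro i hi j hj
    rw [hs, Finset.mem_Icc] at hi hj
    by_cases hij : i < j
    · rw [if_pos hij]
      have hsub : Finset.Ico i j ⊆ Finset.Icc 1 (k-1) := by
        intro l hl
        rw [Finset.mem_Ico] at hl
        rw [Finset.mem_Icc]
        omega
      calc ((j:ℝ)-(i:ℝ)) * ∑ l ∈ Finset.Ico i j, D l
          = ∑ l ∈ Finset.Ico i j, ((j:ℝ)-(i:ℝ)) * D l := Finset.mul_sum _ _ _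
        _ = ∑ l ∈ Finset.Icc 1 (k-1) ∩ Finset.Ico i j, ((j:ℝ)-(i:ℝ)) * D l := by
            rw [Finset.inter_eq_right.mpr hsub]
        _ = ∑ l ∈ Finset.Icc 1 (k-1), (if l ∈ Finset.Ico i j then ((j:ℝ)-(i:ℝ)) * D l else 0) :=
            (Finset.sum_ite_mem _ _ _).symm
        _ = ∑ l ∈ Finset.Icc 1 (k-1), (if i ≤ l ∧ l < j then ((j:ℝ)-(i:ℝ)) * D l else 0) := by
            refine Finset.sum_congr rfl fun l _ => ?_
            simp only [Finset.mem_Ico]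
    · rw [if_neg hij]
      symm
      apply Finset.sum_eq_zero
      intro l _
      have : ¬(i ≤ l ∧ l < j) := by omega
      rw [if_neg this]
  have step4 : ∑ i ∈ s, ∑ j ∈ s, (if i < j then ((j:ℝ)-(i:ℝ)) * ∑ l ∈ Finset.Ico i j, D l else 0)
      = ∑ l ∈ Finset.Icc 1 (k-1), ((k:ℝ) * sig k l) * D l := by
    rw [Finset.sum_congr rfl (fun i hi => Finset.sum_congr rfl (fun j hj => inner_eq i hi j hj))]
    rw [Finset.sum_congr rfl (fun i (_ : i ∈ s) => Finset.sum_comm (s := s)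
      (t := Finset.Icc 1 (k-1))
      (f := fun j l => if i ≤ l ∧ l < j then ((j:ℝ)-(i:ℝ)) * D l else 0))]
    rw [Finset.sum_comm (s := s) (t := Finset.Icc 1 (k-1))]
    refine Finset.sum_congr rfl fun l hl => ?_
    rw [Finset.mem_Icc] at hl
    have hIccl : ∀ i ∈ s, (∑ j ∈ s, if i ≤ l ∧ l < j then ((j:ℝ)-(i:ℝ)) * D l else 0)
        = if i ≤ l then (∑ j ∈ Finset.Ioc l k, ((j:ℝ)-(i:ℝ)) * D l) else 0 := by
      intro i hi
      rw [hs, Finset.mem_Icc] at hi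
      by_cases hil : i ≤ l
      · rw [if_pos hil]
        have hsub : Finset.Ioc l k ⊆ s := by
          intro j hj
          rw [Finset.mem_Ioc] at hj
          rw [hs, Finset.mem_Icc]
          omega
        calc (∑ j ∈ s, if i ≤ l ∧ l < j then ((j:ℝ)-(i:ℝ)) * D l else 0)
            = ∑ j ∈ s, (if j ∈ Finset.Ioc l k then ((j:ℝ)-(i:ℝ)) * D l else 0) := by
              refine Finset.sum_congr rfl fun j hj => ?_
              rw [hs, Finset.mem_Icc] at hj
              have hiff : (i ≤ l ∧ l < j) ↔ j ∈ Finset.Ioc l k := by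
                simp only [Finset.mem_Ioc]; omega
              simp only [hiff]
          _ = ∑ j ∈ s ∩ Finset.Ioc l k, ((j:ℝ)-(i:ℝ)) * D l := Finset.sum_ite_mem _ _ _
          _ = ∑ j ∈ Finset.Ioc l k, ((j:ℝ)-(i:ℝ)) * D l := by
              rw [Finset.inter_eq_right.mpr hsub]
      · rw [if_neg hil]
        apply Finset.sum_eq_zero
        intro j _
        have : ¬(i ≤ l ∧ l < j) := by omega
        rw [if_neg this]
    rw [Finset.sum_congr rfl hIccl]
    have hsub2 : Finset.Icc 1 l ⊆ s := by
      intro i hi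
      rw [Finset.mem_Icc] at hi
      rw [hs, Finset.mem_Icc]
      omega
    have : (∑ i ∈ s, if i ≤ l then (∑ j ∈ Finset.Ioc l k, ((j:ℝ)-(i:ℝ)) * D l) else 0)
        = ∑ i ∈ Finset.Icc 1 l, ∑ j ∈ Finset.Ioc l k, ((j:ℝ)-(i:ℝ)) * D l := by
      calc (∑ i ∈ s, if i ≤ l then (∑ j ∈ Finset.Ioc l k, ((j:ℝ)-(i:ℝ)) * D l) else 0)
          = ∑ i ∈ s, (if i ∈ Finset.Icc 1 l then (∑ j ∈ Finset.Ioc l k, ((j:ℝ)-(i:ℝ)) * D l) else 0) := by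
            refine Finset.sum_congr rfl fun i hi => ?_
            rw [hs, Finset.mem_Icc] at hi
            have hiff : (i ≤ l) ↔ i ∈ Finset.Icc 1 l := by
              simp only [Finset.mem_Icc]; omega
            simp only [hiff]
        _ = ∑ i ∈ s ∩ Finset.Icc 1 l, ∑ j ∈ Finset.Ioc l k, ((j:ℝ)-(i:ℝ)) * D l :=
            Finset.sum_ite_mem _ _ _
        _ = ∑ i ∈ Finset.Icc 1 l, ∑ j ∈ Finset.Ioc l k, ((j:ℝ)-(i:ℝ)) * D l := by
            rw [Finset.inter_eq_right.mpr hsub2]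
    rw [this]
    have hfact : ∑ i ∈ Finset.Icc 1 l, ∑ j ∈ Finset.Ioc l k, ((j:ℝ)-(i:ℝ)) * D l
        = (∑ i ∈ Finset.Icc 1 l, ∑ j ∈ Finset.Ioc l k, ((j:ℝ)-(i:ℝ))) * D l := by
      rw [Finset.sum_mul]
      refine Finset.sum_congr rfl fun i _ => ?_
      rw [Finset.sum_mul]
    rw [hfact, count_id k l hk hl.1 hl.2]
  -- Step 5: assemble
  have mono : ∑ i ∈ s, ∑ j ∈ s, (if i < j then (x i - x j)^2 else 0)
      ≤ ∑ i ∈ s, ∑ j ∈ s, (if i < j then ((j:ℝ)-(i:ℝ)) * ∑ l ∈ Finset.Ico i j, D l else 0) := by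
    refine Finset.sum_le_sum fun i hi => Finset.sum_le_sum fun j hj => ?_
    by_cases hij : i < j
    · rw [if_pos hij, if_pos hij]
      exact step2 i hi j hj hij
    · rw [if_neg hij, if_neg hij]
  have hfin : 2*(k:ℝ)*∑ i ∈ s, x i^2 ≤ 2*(k:ℝ)*∑ l ∈ Finset.Icc 1 (k-1), sig k l * D l := by
    have h1 : ∑ l ∈ Finset.Icc 1 (k-1), ((k:ℝ) * sig k l) * D l
        = (k:ℝ) * ∑ l ∈ Finset.Icc 1 (k-1), sig k l * D l := by
      rw [Finset.mul_sum]
      refine Finset.sum_congr rfl fun l _ => by ring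
    calc 2*(k:ℝ)*∑ i ∈ s, x i^2 = ∑ i ∈ s, ∑ j ∈ s, (x i - x j)^2 := step1.symm
      _ = 2 * ∑ i ∈ s, ∑ j ∈ s, (if i < j then (x i - x j)^2 else 0) := step3
      _ ≤ 2 * ∑ i ∈ s, ∑ j ∈ s, (if i < j then ((j:ℝ)-(i:ℝ)) * ∑ l ∈ Finset.Ico i j, D l else 0) := by
          linarith [mono]
      _ = 2 * ((k:ℝ) * ∑ l ∈ Finset.Icc 1 (k-1), sig k l * D l) := by rw [step4, h1]
      _ = 2*(k:ℝ)*∑ l ∈ Finset.Icc 1 (k-1), sig k l * D l := by ring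
  have hkpos : (0:ℝ) < 2*(k:ℝ) := by positivity
  calc ∑ i ∈ Finset.Icc 1 k, x i ^ 2 = ∑ i ∈ s, x i ^ 2 := by rw [hs]
    _ ≤ ∑ l ∈ Finset.Icc 1 (k-1), sig k l * D l := le_of_mul_le_mul_left hfin hkpos
    _ = ∑ l ∈ Finset.Icc 1 (k-1), sig k l * (x (l+1) - x l)^2 := rfl

lemma core (k : ℕ) (hk : 2 ≤ k) (x y : ℕ → ℝ) (M E : ℝ) (hM : 0 ≤ M) (hE : 0 ≤ E)
    (hsum : ∑ i ∈ Finset.Icc 1 k, x i = 0)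
    (hnorm : Real.sqrt (∑ i ∈ Finset.Icc 1 k, x i ^ 2) ≤ M)
    (herr : Real.sqrt (∑ i ∈ Finset.Icc 1 k, (y i - fP k x i) ^ 2) ≤ E) :
    ∑ i ∈ Finset.Icc 1 k, 2 * (x i * y i)
      ≤ -(2/(1+2*M)) * ∑ i ∈ Finset.Icc 1 k, x i ^ 2
        + 2 * E * Real.sqrt (∑ i ∈ Finset.Icc 1 k, x i ^ 2) := by
  set V := ∑ i ∈ Finset.Icc 1 k, x i ^ 2 with hV
  have hVnn : 0 ≤ V := Finset.sum_nonneg fun i _ => sq_nonneg _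
  -- componentwise bound
  have hxb : ∀ i ∈ Finset.Icc 1 k, |x i| ≤ M := by
    intro i hi
    have h1 : x i ^ 2 ≤ V := Finset.single_le_sum (fun j _ => sq_nonneg (x j)) hi
    calc |x i| = Real.sqrt (x i ^ 2) := (Real.sqrt_sq_eq_abs _).symm
      _ ≤ Real.sqrt V := Real.sqrt_le_sqrt h1
      _ ≤ M := hnorm
  have hdb : ∀ l ∈ Finset.Icc 1 (k-1), |x (l+1) - x l| ≤ 2*M := by
    intro l hl
    rw [Finset.mem_Icc] at hl
    have h1 : |x (l+1)| ≤ M := hxb (l+1) (by rw [Finset.mem_Icc]; omega)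
    have h2 : |x l| ≤ M := hxb l (by rw [Finset.mem_Icc]; omega)
    calc |x (l+1) - x l| ≤ |x (l+1)| + |x l| := abs_sub _ _
      _ ≤ 2*M := by linarith
  -- Abel summation
  set G : ℕ → ℝ := fun l => Real.exp (-(x (l+1) - x l)) - 1 with hG
  have habel : ∑ i ∈ Finset.Icc 1 k, x i * fP k x i
      = ∑ l ∈ Finset.Icc 1 (k-1), sig k l * G l * (x (l+1) - x l) := by
    have hfPG : ∀ i ∈ Finset.Icc 1 k,
        x i * fP k x i = x i * (sig k (i-1) * G (i-1) - sig k i * G i) := by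
      intro i hi
      rw [Finset.mem_Icc] at hi
      have h1 : i - 1 + 1 = i := by omega
      simp only [fP, hG, h1]
    rw [Finset.sum_congr rfl hfPG, abel_sum x (sig k) G k (by omega)]
    have hs0 : sig k 0 = 0 := by simp [sig]
    have hsk : sig k k = 0 := by simp [sig]
    rw [hs0, hsk]
    ring
  -- pointwise exponential bound
  have hpt : ∀ l ∈ Finset.Icc 1 (k-1),
      sig k l * G l * (x (l+1) - x l) ≤ -(1/(1+2*M)) * (sig k l * (x (l+1) - x l)^2) := by
    intro l hl
    have hsig : 0 ≤ sig k l := by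
      rw [Finset.mem_Icc] at hl
      have : (l:ℝ) ≤ (k:ℝ) := by exact_mod_cast (by omega : l ≤ k)
      have : 0 ≤ (k:ℝ) - (l:ℝ) := by linarith
      have hl0 : 0 ≤ (l:ℝ) := Nat.cast_nonneg l
      unfold sig; positivity
    have hexp := exp_pointwise (M := 2*M) (d := x (l+1) - x l) (by linarith) (hdb l hl)
    calc sig k l * G l * (x (l+1) - x l)
        = sig k l * ((x (l+1) - x l) * (Real.exp (-(x (l+1) - x l)) - 1)) := by
          rw [hG]; ring
      _ ≤ sig k l * (-(1/(1+2*M)) * (x (l+1) - x l)^2) := by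
          exact mul_le_mul_of_nonneg_left hexp hsig
      _ = -(1/(1+2*M)) * (sig k l * (x (l+1) - x l)^2) := by ring
  have hdrift : ∑ i ∈ Finset.Icc 1 k, x i * fP k x i ≤ -(1/(1+2*M)) * V := by
    calc ∑ i ∈ Finset.Icc 1 k, x i * fP k x i
        = ∑ l ∈ Finset.Icc 1 (k-1), sig k l * G l * (x (l+1) - x l) := habel
      _ ≤ ∑ l ∈ Finset.Icc 1 (k-1), -(1/(1+2*M)) * (sig k l * (x (l+1) - x l)^2) :=
          Finset.sum_le_sum hpt
      _ = -(1/(1+2*M)) * ∑ l ∈ Finset.Icc 1 (k-1), sig k l * (x (l+1) - x l)^2 := by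
          rw [Finset.mul_sum]
      _ ≤ -(1/(1+2*M)) * V := by
          have hP := poincare k hk x hsum
          have hc : 0 < 1/(1+2*M) := by positivity
          rw [hV]
          nlinarith [hP]
  -- Cauchy-Schwarz for the error term
  have hCS : ∑ i ∈ Finset.Icc 1 k, x i * (y i - fP k x i) ≤ E * Real.sqrt V := by
    calc ∑ i ∈ Finset.Icc 1 k, x i * (y i - fP k x i)
        ≤ Real.sqrt (∑ i ∈ Finset.Icc 1 k, x i ^ 2)
          * Real.sqrt (∑ i ∈ Finset.Icc 1 k, (y i - fP k x i) ^ 2) :=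
          Real.sum_mul_le_sqrt_mul_sqrt _ _ _
      _ ≤ Real.sqrt V * E := by
          exact mul_le_mul_of_nonneg_left herr (Real.sqrt_nonneg _)
      _ = E * Real.sqrt V := by ring
  have hsplit : ∑ i ∈ Finset.Icc 1 k, 2 * (x i * y i)
      = 2 * (∑ i ∈ Finset.Icc 1 k, x i * fP k x i)
        + 2 * ∑ i ∈ Finset.Icc 1 k, x i * (y i - fP k x i) := by
    rw [← Finset.mul_sum, ← mul_add, ← Finset.sum_add_distrib]
    congr 1
    exact Finset.sum_congr rfl fun i _ => by ring
  rw [hsplit]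
  have h1 := mul_le_mul_of_nonneg_left hdrift (by norm_num : (0:ℝ) ≤ 2)
  have h2 := mul_le_mul_of_nonneg_left hCS (by norm_num : (0:ℝ) ≤ 2)
  calc 2 * ∑ i ∈ Finset.Icc 1 k, x i * fP k x i
        + 2 * ∑ i ∈ Finset.Icc 1 k, x i * (y i - fP k x i)
      ≤ 2 * (-(1/(1+2*M)) * V) + 2 * (E * Real.sqrt V) := add_le_add h1 h2
    _ = -(2/(1+2*M)) * V + 2 * E * Real.sqrt V := by ring

lemma barrier {V Vd B Bd : ℝ → ℝ} {a : ℝ}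
    (hV : ∀ τ, a ≤ τ → HasDerivAt V (Vd τ) τ)
    (hB : ∀ τ, HasDerivAt B (Bd τ) τ)
    (h0 : V a ≤ B a)
    (hlt : ∀ τ, a ≤ τ → V τ = B τ → Vd τ < Bd τ) :
    ∀ τ, a ≤ τ → V τ ≤ B τ := by
  intro τ hτ
  have h := image_le_of_deriv_right_lt_deriv_boundary
    (f := V) (f' := Vd) (a := a) (b := τ) (B := B) (B' := Bd)
    (fun x hx => (hV x hx.1).continuousAt.continuousWithinAt)
    (fun x hx => (hV x hx.1).hasDerivWithinAt)
    h0 hB (fun x hx heq => hlt x hx.1 heq)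
  exact h ⟨hτ, le_refl τ⟩

set_option maxHeartbeats 2000000 in
theorem stmt16 (k : ℕ) (hk : 2 ≤ k) (η C₀ τ₀ : ℝ)
    (hη₀ : 0 < η) (hη₁ : η < 1) (hC₀ : 0 < C₀) (hτ₀ : 0 ≤ τ₀) :
    ∃ C > 0, ∀ ξ ξ' : ℕ → ℝ → ℝ,
      (∀ i, 1 ≤ i → i ≤ k → ∀ τ : ℝ, τ₀ ≤ τ → HasDerivAt (ξ i) (ξ' i τ) τ) →
      (∀ τ : ℝ, τ₀ ≤ τ → ∑ i ∈ Finset.Icc 1 k, ξ i τ = 0) →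
      (∀ τ : ℝ, τ₀ ≤ τ →
        Real.sqrt (∑ i ∈ Finset.Icc 1 k, (ξ i τ) ^ 2) ≤ C₀) →
      (∀ τ : ℝ, τ₀ ≤ τ →
        Real.sqrt (∑ i ∈ Finset.Icc 1 k, (ξ' i τ - fP k (fun j => ξ j τ) i) ^ 2)
          ≤ C₀ * Real.exp (-η * τ)) →
      ∀ τ : ℝ, τ₀ ≤ τ →
        Real.sqrt (∑ i ∈ Finset.Icc 1 k, (ξ i τ) ^ 2) ≤ C * Real.exp (-η * τ) := by
  -- constants
  set c₁ := 1/(1+2*C₀) with hc₁def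
  have hc₁pos : 0 < c₁ := by rw [hc₁def]; positivity
  set ρ := min c₁ η / 2 with hρdef
  have hminpos : 0 < min c₁ η := lt_min hc₁pos hη₀
  have hρpos : 0 < ρ := by rw [hρdef]; linarith
  have hρc₁ : ρ < c₁ := by
    have h1 : min c₁ η ≤ c₁ := min_le_left _ _
    rw [hρdef]; linarith
  have h2ρη : 2*ρ ≤ η := by
    have h1 : min c₁ η ≤ η := min_le_right _ _
    rw [hρdef]; linarith
  have hc₁ρ : 0 < c₁ - ρ := by linarith
  set δ := (1-η)/4 with hδdef
  have hδpos : 0 < δ := by rw [hδdef]; linarith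
  set c₂ := 1/(1+2*δ) with hc₂def
  have hc₂η : η < c₂ := by
    rw [hc₂def, hδdef, lt_div_iff₀ (by linarith : (0:ℝ) < 1 + 2*((1-η)/4))]
    nlinarith [hη₀, hη₁]
  have hc₂ηpos : 0 < c₂ - η := by linarith
  set A₁ := (C₀^2+1)/(c₁-ρ) + C₀^2 + 1 with hA₁def
  have hfrac1 : (c₁-ρ)*((C₀^2+1)/(c₁-ρ)) = C₀^2+1 := by field_simp
  have hA₁C : C₀^2 + 1 ≤ A₁ := by
    have : 0 < (C₀^2+1)/(c₁-ρ) := by positivity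
    rw [hA₁def]; linarith
  have hA₁pos : 0 < A₁ := by nlinarith [sq_nonneg C₀]
  have hA₁key : C₀^2 < (c₁-ρ)*A₁ := by
    have h2 : (c₁-ρ)*A₁ = (C₀^2+1) + (c₁-ρ)*(C₀^2+1) := by
      rw [hA₁def]; rw [mul_add, mul_add, hfrac1]; ring
    nlinarith [mul_pos hc₁ρ (by nlinarith [sq_nonneg C₀] : (0:ℝ) < C₀^2+1)]
  set T := τ₀ + max 0 (Real.log (A₁/δ^2)) / (2*ρ) with hTdef
  have hmax0 : 0 ≤ max 0 (Real.log (A₁/δ^2)) := le_max_left 0 _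
  have hTτ₀ : τ₀ ≤ T := by
    rw [hTdef]
    have : 0 ≤ max 0 (Real.log (A₁/δ^2)) / (2*ρ) := by positivity
    linarith
  have hT0 : 0 ≤ T := le_trans hτ₀ hTτ₀
  have hTeq : -(2*ρ)*(T-τ₀) = -(max 0 (Real.log (A₁/δ^2))) := by
    rw [hTdef]
    field_simp
    ring
  have h2c₁ : 2/(1+2*C₀) = 2*c₁ := by rw [hc₁def]; ring
  have h2c₂ : 2/(1+2*δ) = 2*c₂ := by rw [hc₂def]; ring
  clear_value T
  clear hTdef
  clear_value A₁
  clear hA₁def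
  clear_value c₂
  clear hc₂def
  clear_value δ
  clear hδdef
  clear_value ρ
  clear hρdef
  clear_value c₁
  clear hc₁def
  set A₂ := (C₀+1)/(c₂-η) + δ*Real.exp (η*T) + 1 with hA₂def
  have hfrac2 : (c₂-η)*((C₀+1)/(c₂-η)) = C₀+1 := by field_simp
  have hδe : 0 < δ*Real.exp (η*T) := mul_pos hδpos (Real.exp_pos _)
  have hA₂δe : δ*Real.exp (η*T) ≤ A₂ := by
    have : 0 < (C₀+1)/(c₂-η) := div_pos (by linarith) hc₂ηpos
    rw [hA₂def]; linarith
  have hA₂pos : 0 < A₂ := by linarith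
  have hA₂key : C₀ < (c₂-η)*A₂ := by
    have h2 : (c₂-η)*A₂ = (C₀+1) + (c₂-η)*(δ*Real.exp (η*T) + 1) := by
      rw [hA₂def, mul_add, mul_add, hfrac2]; ring
    nlinarith [mul_pos hc₂ηpos (by linarith : (0:ℝ) < δ*Real.exp (η*T) + 1)]
  clear_value A₂
  clear hA₂def
  refine ⟨A₂ + C₀*Real.exp (η*T), add_pos hA₂pos (by positivity), ?_⟩
  intro ξ ξ' hderiv hsum hnorm herr
  set V : ℝ → ℝ := fun τ => ∑ i ∈ Finset.Icc 1 k, ξ i τ^2 with hVdef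
  set Vd : ℝ → ℝ := fun τ => ∑ i ∈ Finset.Icc 1 k, 2*(ξ i τ * ξ' i τ) with hVddef
  have hVderiv : ∀ τ, τ₀ ≤ τ → HasDerivAt V (Vd τ) τ := by
    intro τ hτ
    have h : ∀ i ∈ Finset.Icc 1 k, HasDerivAt (fun t => ξ i t^2) (2*(ξ i τ * ξ' i τ)) τ := by
      intro i hi
      rw [Finset.mem_Icc] at hi
      have h1 := (hderiv i hi.1 hi.2 τ hτ).pow 2
      exact h1.congr_deriv (by push_cast; ring)
    exact HasDerivAt.fun_sum h
  have hVnn : ∀ τ, 0 ≤ V τ := fun τ => Finset.sum_nonneg fun i _ => sq_nonneg _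
  have hsqV : ∀ τ, τ₀ ≤ τ → Real.sqrt (V τ) ≤ C₀ := fun τ hτ => hnorm τ hτ
  have hVC : ∀ τ, τ₀ ≤ τ → V τ ≤ C₀^2 := by
    intro τ hτ
    have h1 := hsqV τ hτ
    nlinarith [Real.sq_sqrt (hVnn τ), Real.sqrt_nonneg (V τ)]
  have hcore : ∀ τ, τ₀ ≤ τ → ∀ M, 0 ≤ M → Real.sqrt (V τ) ≤ M →
      Vd τ ≤ -(2/(1+2*M)) * V τ + 2*(C₀*Real.exp (-η*τ))*Real.sqrt (V τ) := by
    intro τ hτ M hM hMb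
    exact core k hk (fun i => ξ i τ) (fun i => ξ' i τ) M (C₀*Real.exp (-η*τ)) hM
      (by positivity) (hsum τ hτ) hMb (herr τ hτ)
  -- Stage 1
  have hstage1 : ∀ τ, τ₀ ≤ τ → V τ ≤ A₁ * Real.exp (-(2*ρ)*(τ-τ₀)) := by
    apply barrier (Bd := fun τ => -(2*ρ) * (A₁ * Real.exp (-(2*ρ)*(τ-τ₀)))) hVderiv
    · intro τ
      have h1 : HasDerivAt (fun t : ℝ => -(2*ρ)*(t-τ₀)) (-(2*ρ)) τ := by
        simpa using ((hasDerivAt_id τ).sub_const τ₀).const_mul (-(2*ρ))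
      have h2 := (h1.exp).const_mul A₁
      exact h2.congr_deriv (by ring)
    · have h1 : Real.exp (-(2*ρ)*(τ₀-τ₀)) = 1 := by norm_num
      rw [h1, mul_one]
      have h2 := hVC τ₀ le_rfl
      nlinarith
    · intro τ hτ heq
      have hVd := hcore τ hτ C₀ hC₀.le (hsqV τ hτ)
      have hEpos : 0 < Real.exp (-(2*ρ)*(τ-τ₀)) := Real.exp_pos _
      have hτ0 : 0 ≤ τ := le_trans hτ₀ hτ
      have hee : Real.exp (-η*τ) ≤ Real.exp (-(2*ρ)*(τ-τ₀)) := by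
        apply Real.exp_le_exp.2
        nlinarith [mul_le_mul_of_nonneg_right h2ρη hτ0, mul_nonneg hρpos.le hτ₀]
      rw [h2c₁, heq] at hVd
      have hsq2 : Real.sqrt (A₁ * Real.exp (-(2*ρ)*(τ-τ₀))) ≤ C₀ := by
        rw [← heq]; exact hsqV τ hτ
      have hprod : Real.exp (-η*τ) * Real.sqrt (A₁ * Real.exp (-(2*ρ)*(τ-τ₀)))
          ≤ Real.exp (-(2*ρ)*(τ-τ₀)) * C₀ :=
        mul_le_mul hee hsq2 (Real.sqrt_nonneg _) hEpos.le
      have hm : 0 < Real.exp (-(2*ρ)*(τ-τ₀)) * ((c₁-ρ)*A₁ - C₀^2) :=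
        mul_pos hEpos (by linarith)
      nlinarith [hVd, hm, mul_le_mul_of_nonneg_left hprod (by linarith : (0:ℝ) ≤ 2*C₀)]
  have hsmall : ∀ τ, T ≤ τ → V τ ≤ δ^2 := by
    intro τ hτ'
    have hτ : τ₀ ≤ τ := le_trans hTτ₀ hτ'
    have h1 := hstage1 τ hτ
    have hmono : Real.exp (-(2*ρ)*(τ-τ₀)) ≤ Real.exp (-(2*ρ)*(T-τ₀)) := by
      apply Real.exp_le_exp.2
      nlinarith [mul_le_mul_of_nonneg_left (by linarith : T - τ₀ ≤ τ - τ₀) hρpos.le]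
    have h3 : V τ ≤ A₁ * Real.exp (-(max 0 (Real.log (A₁/δ^2)))) := by
      rw [← hTeq]
      calc V τ ≤ A₁ * Real.exp (-(2*ρ)*(τ-τ₀)) := h1
        _ ≤ A₁ * Real.exp (-(2*ρ)*(T-τ₀)) := mul_le_mul_of_nonneg_left hmono hA₁pos.le
    rcases le_or_gt 0 (Real.log (A₁/δ^2)) with h | h
    · rw [max_eq_right h] at h3
      have h4 : Real.exp (-(Real.log (A₁/δ^2))) = δ^2/A₁ := by
        rw [Real.exp_neg, Real.exp_log (by positivity), inv_div]
      rw [h4] at h3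
      calc V τ ≤ A₁ * (δ^2/A₁) := h3
        _ = δ^2 := by field_simp
    · rw [max_eq_left h.le] at h3
      have h5 : A₁/δ^2 < 1 := by
        by_contra hcon
        push_neg at hcon
        exact absurd (Real.log_nonneg hcon) (not_le.2 h)
      have h6 : A₁ < δ^2 := by
        rw [div_lt_one (by positivity)] at h5
        exact h5
      calc V τ ≤ A₁ * Real.exp (-(0:ℝ)) := h3
        _ = A₁ := by norm_num
        _ ≤ δ^2 := h6.le
  -- Stage 2
  have hstage2 : ∀ τ, T ≤ τ → V τ ≤ A₂^2 * Real.exp (-(2*η)*τ) := by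
    apply barrier (Bd := fun τ => -(2*η) * (A₂^2 * Real.exp (-(2*η)*τ)))
      (fun τ hτ => hVderiv τ (le_trans hTτ₀ hτ))
    · intro τ
      have h1 : HasDerivAt (fun t : ℝ => -(2*η)*t) (-(2*η)) τ := by
        simpa using (hasDerivAt_id τ).const_mul (-(2*η))
      have h2 := (h1.exp).const_mul (A₂^2)
      exact h2.congr_deriv (by ring)
    · have hee : Real.exp (η*T) * Real.exp (η*T) * Real.exp (-(2*η)*T) = 1 := by
        rw [← Real.exp_add, ← Real.exp_add, show η*T + η*T + -(2*η)*T = 0 by ring,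
          Real.exp_zero]
      have h2 : (δ*Real.exp (η*T))^2 ≤ A₂^2 := by nlinarith [hδe, hA₂δe]
      calc V T ≤ δ^2 := hsmall T le_rfl
        _ = (δ*Real.exp (η*T))^2 * Real.exp (-(2*η)*T) := by
            have h3 : (δ*Real.exp (η*T))^2 * Real.exp (-(2*η)*T)
                = δ^2 * (Real.exp (η*T) * Real.exp (η*T) * Real.exp (-(2*η)*T)) := by ring
            rw [h3, hee, mul_one]
        _ ≤ A₂^2 * Real.exp (-(2*η)*T) :=
            mul_le_mul_of_nonneg_right h2 (Real.exp_pos _).le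
    · intro τ hτ' heq
      have hτ : τ₀ ≤ τ := le_trans hTτ₀ hτ'
      have hVδ : Real.sqrt (V τ) ≤ δ := by
        have h1 : V τ ≤ δ^2 := hsmall τ hτ'
        calc Real.sqrt (V τ) ≤ Real.sqrt (δ^2) := Real.sqrt_le_sqrt h1
          _ = δ := Real.sqrt_sq hδpos.le
      have hVd := hcore τ hτ δ hδpos.le hVδ
      rw [h2c₂] at hVd
      have hPpos : 0 < Real.exp (-η*τ) := Real.exp_pos _
      have hE2 : Real.exp (-η*τ)^2 = Real.exp (-(2*η)*τ) := by
        rw [sq, ← Real.exp_add]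
        congr 1
        ring
      rw [← hE2] at heq
      have hsqrt : Real.sqrt (V τ) = A₂ * Real.exp (-η*τ) := by
        rw [heq, ← mul_pow]
        exact Real.sqrt_sq (mul_nonneg hA₂pos.le hPpos.le)
      rw [hsqrt, heq] at hVd
      rw [← hE2]
      have hm : 0 < (Real.exp (-η*τ) * Real.exp (-η*τ) * A₂) * ((c₂-η)*A₂ - C₀) :=
        mul_pos (mul_pos (mul_pos hPpos hPpos) hA₂pos) (by linarith)
      nlinarith [hVd, hm]
  -- conclusion
  intro τ hτ
  rcases le_or_gt T τ with h | h
  · have h1 := hstage2 τ h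
    have hPpos : 0 < Real.exp (-η*τ) := Real.exp_pos _
    have hE2 : Real.exp (-η*τ)^2 = Real.exp (-(2*η)*τ) := by
      rw [sq, ← Real.exp_add]
      congr 1
      ring
    have h2 : Real.sqrt (V τ) ≤ A₂ * Real.exp (-η*τ) := by
      calc Real.sqrt (V τ) ≤ Real.sqrt (A₂^2 * Real.exp (-(2*η)*τ)) := Real.sqrt_le_sqrt h1
        _ = A₂ * Real.exp (-η*τ) := by
            rw [← hE2, ← mul_pow]
            exact Real.sqrt_sq (mul_nonneg hA₂pos.le hPpos.le)
    calc Real.sqrt (V τ) ≤ A₂ * Real.exp (-η*τ) := h2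
      _ ≤ (A₂ + C₀*Real.exp (η*T)) * Real.exp (-η*τ) := by
          nlinarith [mul_pos (mul_pos hC₀ (Real.exp_pos (η*T))) hPpos]
  · have h1 := hsqV τ hτ
    have h2 : 1 ≤ Real.exp (η*T) * Real.exp (-η*τ) := by
      rw [← Real.exp_add]
      apply Real.one_le_exp
      nlinarith [h.le]
    calc Real.sqrt (V τ) ≤ C₀ := h1
      _ ≤ C₀ * (Real.exp (η*T) * Real.exp (-η*τ)) := by
          nlinarith [mul_le_mul_of_nonneg_left h2 hC₀.le]
      _ ≤ (A₂ + C₀*Real.exp (η*T)) * Real.exp (-η*τ) := by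
          nlinarith [mul_pos hA₂pos (Real.exp_pos (-η*τ))]
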